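/- Let W be a 3×3 matrix with nonnegative real entries whose three row sums and three column sums all equal 3, and suppose w_{ii} = 1 and w_{jj} = 1 for two distinct indices i ≠ j. If the map Φ_W is positive, then Φ_W is optimal. -/

import Mathlib

open Matrix BigOperators
open scoped ComplexOrder

/-- The generalized Choi map `Φ_W(X) = D_W(X) - X`, as a linear map. -/
noncomputable def PhiW (W : Matrix (Fin 3) (Fin 3) ℝ) :
    Matrix (Fin 3) (Fin 3) ℂ →ₗ[ℂ] Matrix (Fin 3) (Fin 3) ℂ where
  toFun X := Matrix.diagonal (fun i => ∑ j, (W i j : ℂ) * X j j) - X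
  map_add' X Y := by
    ext i j
    by_cases h : i = j <;>
      simp [Matrix.diagonal_apply, h, Matrix.add_apply, mul_add,
        Finset.sum_add_distrib] <;> ring
  map_smul' r X := by
    ext i j
    by_cases h : i = j <;>
      simp [Matrix.diagonal_apply, h, Matrix.smul_apply, Finset.mul_sum,
        smul_eq_mul, mul_sub, mul_left_comm]

/-- `Φ` is a positive map. -/
def IsPositiveMap (Φ : Matrix (Fin 3) (Fin 3) ℂ →ₗ[ℂ] Matrix (Fin 3) (Fin 3) ℂ) : Prop :=
  ∀ X : Matrix (Fin 3) (Fin 3) ℂ, X.PosSemidef → (Φ X).PosSemidef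

/-- The Choi matrix `∑ i j, E_{ij} ⊗ Ψ(E_{ij})` of a linear map. -/
def ChoiMatrix (Ψ : Matrix (Fin 3) (Fin 3) ℂ →ₗ[ℂ] Matrix (Fin 3) (Fin 3) ℂ) :
    Matrix (Fin 3 × Fin 3) (Fin 3 × Fin 3) ℂ :=
  Matrix.of fun p q => Ψ (Matrix.single p.1 q.1 1) p.2 q.2

/-- `Ψ` is completely positive iff its Choi matrix is positive semidefinite. -/
def IsCompletelyPositive
    (Ψ : Matrix (Fin 3) (Fin 3) ℂ →ₗ[ℂ] Matrix (Fin 3) (Fin 3) ℂ) : Prop :=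
  (ChoiMatrix Ψ).PosSemidef

/-- A positive map `Φ` is optimal if for every completely positive map `Ψ` such that
`Φ - Ψ` is positive, one has `Ψ = 0`. -/
def IsOptimal (Φ : Matrix (Fin 3) (Fin 3) ℂ →ₗ[ℂ] Matrix (Fin 3) (Fin 3) ℂ) : Prop :=
  ∀ Ψ : Matrix (Fin 3) (Fin 3) ℂ →ₗ[ℂ] Matrix (Fin 3) (Fin 3) ℂ,
    IsCompletelyPositive Ψ → IsPositiveMap (Φ - Ψ) → Ψ = 0

/-! ### Auxiliary lemmas -/

lemma aux_psd_outer (x : Fin 3 → ℂ) : (vecMulVec x (star x)).PosSemidef := by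
  refine posSemidef_iff_dotProduct_mulVec.mpr ⟨?_, ?_⟩
  · ext a b
    simp [vecMulVec_apply, conjTranspose_apply, mul_comm]
  · intro v
    have : star v ⬝ᵥ (vecMulVec x (star x)) *ᵥ v
        = star (star x ⬝ᵥ v) * (star x ⬝ᵥ v) := by
      simp [dotProduct, mulVec, vecMulVec_apply, Finset.mul_sum, Finset.sum_mul,
        Fin.sum_univ_three]
      ring
    rw [this]
    exact star_mul_self_nonneg _

lemma aux_matrix_decomp (X : Matrix (Fin 3) (Fin 3) ℂ) :
    X = ∑ a : Fin 3, ∑ b : Fin 3, X a b • Matrix.single a b 1 := by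
  ext c d
  simp [Matrix.sum_apply, Matrix.single, Fin.sum_univ_three]
  fin_cases c <;> fin_cases d <;> simp

set_option maxHeartbeats 1000000 in
lemma aux_choi_quadratic (Ψ : Matrix (Fin 3) (Fin 3) ℂ →ₗ[ℂ] Matrix (Fin 3) (Fin 3) ℂ)
    (x y : Fin 3 → ℂ) :
    star (fun p : Fin 3 × Fin 3 => star (x p.1) * y p.2) ⬝ᵥ
      (ChoiMatrix Ψ *ᵥ fun p : Fin 3 × Fin 3 => star (x p.1) * y p.2)
      = star y ⬝ᵥ (Ψ (vecMulVec x (star x)) *ᵥ y) := by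
  conv_rhs => rw [aux_matrix_decomp (vecMulVec x (star x))]
  simp only [map_sum, LinearMap.map_smul]
  simp only [ChoiMatrix, dotProduct, mulVec, Fintype.sum_prod_type, Fin.sum_univ_three,
    Matrix.sum_apply, Matrix.smul_apply, vecMulVec_apply, smul_eq_mul, Pi.star_apply,
    Matrix.of_apply, Matrix.add_apply, StarMul.star_mul, star_star]
  ring

lemma aux_phi_quad (W : Matrix (Fin 3) (Fin 3) ℝ) (x y : Fin 3 → ℂ) :
    star y ⬝ᵥ (PhiW W (vecMulVec x (star x)) *ᵥ y)
    = (∑ i, star (y i) * y i * ∑ j, (W i j : ℂ) * (x j * star (x j)))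
      - (star y ⬝ᵥ x) * star (star y ⬝ᵥ x) := by
  simp only [PhiW, LinearMap.coe_mk, AddHom.coe_mk, sub_mulVec, dotProduct_sub,
    dotProduct, mulVec, Fin.sum_univ_three, Matrix.diagonal_apply, vecMulVec_apply,
    Pi.star_apply, Matrix.sub_apply, StarMul.star_mul, star_star]
  simp [Fin.sum_univ_three]
  ring

lemma aux_phi_quad_zero (W : Matrix (Fin 3) (Fin 3) ℝ)
    (hrow : ∀ i, ∑ j, W i j = 3) (x : Fin 3 → ℂ)
    (hx : ∀ m, x m * star (x m) = 1) :
    star x ⬝ᵥ (PhiW W (vecMulVec x (star x)) *ᵥ x) = 0 := by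
  have hr : ∀ i : Fin 3, (W i 0 : ℂ) + W i 1 + W i 2 = 3 := by
    intro i
    have := hrow i
    rw [Fin.sum_univ_three] at this
    exact_mod_cast congrArg (Complex.ofReal) this
  rw [aux_phi_quad]
  simp only [Fin.sum_univ_three, dotProduct, Pi.star_apply, star_add, StarMul.star_mul, star_star]
  linear_combination
    ((W 0 0 : ℂ) * (star (x 0) * x 0) + (W 1 0 : ℂ) * (star (x 1) * x 1) + (W 2 0 : ℂ) * (star (x 2) * x 2)) * hx 0
    + ((W 0 1 : ℂ) * (star (x 0) * x 0) + (W 1 1 : ℂ) * (star (x 1) * x 1) + (W 2 1 : ℂ) * (star (x 2) * x 2)) * hx 1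
    + ((W 0 2 : ℂ) * (star (x 0) * x 0) + (W 1 2 : ℂ) * (star (x 1) * x 1) + (W 2 2 : ℂ) * (star (x 2) * x 2)) * hx 2
    + ((W 0 0 : ℂ) + (W 0 1 : ℂ) + (W 0 2 : ℂ)) * hx 0
    + ((W 1 0 : ℂ) + (W 1 1 : ℂ) + (W 1 2 : ℂ)) * hx 1
    + ((W 2 0 : ℂ) + (W 2 1 : ℂ) + (W 2 2 : ℂ)) * hx 2
    + hr 0 + hr 1 + hr 2
    - (star (x 0) * x 0 + star (x 1) * x 1 + star (x 2) * x 2 + 3) * (hx 0 + hx 1 + hx 2)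

lemma aux_phi_quad_zero_single (W : Matrix (Fin 3) (Fin 3) ℝ) (i : Fin 3) (hii : W i i = 1) :
    star (fun m => if m = i then (1:ℂ) else 0) ⬝ᵥ
      (PhiW W (vecMulVec (fun m => if m = i then (1:ℂ) else 0)
        (star (fun m => if m = i then (1:ℂ) else 0))) *ᵥ (fun m => if m = i then (1:ℂ) else 0)) = 0 := by
  rw [aux_phi_quad]
  have hca : (W i i : ℂ) = 1 := by exact_mod_cast congrArg Complex.ofReal hii
  fin_cases i <;>
    simp_all [Fin.sum_univ_three, dotProduct]

lemma aux_ker_of_zero (W : Matrix (Fin 3) (Fin 3) ℝ)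
    (Ψ : Matrix (Fin 3) (Fin 3) ℂ →ₗ[ℂ] Matrix (Fin 3) (Fin 3) ℂ)
    (hC : (ChoiMatrix Ψ).PosSemidef) (hsub : IsPositiveMap (PhiW W - Ψ))
    (x : Fin 3 → ℂ)
    (hΦ : star x ⬝ᵥ (PhiW W (vecMulVec x (star x)) *ᵥ x) = 0) :
    ChoiMatrix Ψ *ᵥ (fun p : Fin 3 × Fin 3 => star (x p.1) * x p.2) = 0 := by
  set v := fun p : Fin 3 × Fin 3 => star (x p.1) * x p.2 with hv
  have h1 : star v ⬝ᵥ (ChoiMatrix Ψ *ᵥ v)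
      = star x ⬝ᵥ (Ψ (vecMulVec x (star x)) *ᵥ x) := aux_choi_quadratic Ψ x x
  have h2 : 0 ≤ star v ⬝ᵥ (ChoiMatrix Ψ *ᵥ v) := hC.dotProduct_mulVec_nonneg v
  have h3 := (hsub _ (aux_psd_outer x)).dotProduct_mulVec_nonneg x
  rw [LinearMap.sub_apply, sub_mulVec, dotProduct_sub, hΦ, zero_sub] at h3
  have h4 : star x ⬝ᵥ (Ψ (vecMulVec x (star x)) *ᵥ x) ≤ 0 := neg_nonneg.mp h3
  have h5 : star v ⬝ᵥ (ChoiMatrix Ψ *ᵥ v) = 0 := le_antisymm (h1 ▸ h4) h2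
  exact (hC.dotProduct_mulVec_zero_iff v).mp h5

lemma aux_solve_system (c : Fin 3 × Fin 3 → ℂ) (i j : Fin 3) (hij : i ≠ j)
    (hi : c (i, i) = 0) (hj : c (j, j) = 0)
    (H : ∀ α β : ℂ, α * star α = 1 → β * star β = 1 →
      (c (0,0) + c (1,1) + c (2,2)) + c (0,1) * α + c (1,0) * star α
        + c (0,2) * β + c (2,0) * star β
        + c (1,2) * (star α * β) + c (2,1) * (α * star β) = 0) :
    ∀ q, c q = 0 := by
  have n1 : (1 : ℂ) * star 1 = 1 := by simp
  have nm1 : (-1 : ℂ) * star (-1) = 1 := by simp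
  have nI : (Complex.I) * star Complex.I = 1 := by
    simp [Complex.star_def, Complex.conj_I, Complex.I_mul_I]
  have nmI : (-Complex.I) * star (-Complex.I) = 1 := by
    simp [Complex.star_def, Complex.conj_I, Complex.I_mul_I]
  have h1 := H 1 1 n1 n1
  have h2 := H (-1) 1 nm1 n1
  have h3 := H 1 (-1) n1 nm1
  have h4 := H (-1) (-1) nm1 nm1
  have h5 := H Complex.I 1 nI n1
  have h6 := H (-Complex.I) 1 nmI n1
  have h7 := H Complex.I (-1) nI nm1
  have h8 := H (-Complex.I) (-1) nmI nm1
  have h9 := H 1 Complex.I n1 nI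
  have h10 := H 1 (-Complex.I) n1 nmI
  simp only [Complex.star_def, _root_.map_one, map_neg, Complex.conj_I, star_one]
    at h1 h2 h3 h4 h5 h6 h7 h8 h9 h10
  have t0 : c (0,0) + c (1,1) + c (2,2) = 0 := by linear_combination (h1 + h2 + h3 + h4) / 4
  have d1 : c (0,1) + c (1,0) = 0 := by linear_combination (h1 - h2 + h3 - h4) / 4
  have d2 : c (1,2) + c (2,1) = 0 := by linear_combination (h1 - h2 - h3 + h4) / 4
  have d3 : c (0,2) + c (2,0) = 0 := by linear_combination (h1 + h2 - h3 - h4) / 4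
  have e1' : Complex.I * (c (0,1) - c (1,0) - c (1,2) + c (2,1)) = 0 := by
    linear_combination (h5 - h6) / 2
  have e2' : Complex.I * (c (0,1) - c (1,0) + c (1,2) - c (2,1)) = 0 := by
    linear_combination (h7 - h8) / 2
  have e3' : Complex.I * (c (0,2) - c (2,0) + c (1,2) - c (2,1)) = 0 := by
    linear_combination (h9 - h10) / 2
  have Ine : (Complex.I : ℂ) ≠ 0 := Complex.I_ne_zero
  have e1 := (mul_eq_zero.mp e1').resolve_left Ine
  have e2 := (mul_eq_zero.mp e2').resolve_left Ine
  have e3 := (mul_eq_zero.mp e3').resolve_left Ine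
  have c01 : c (0,1) = 0 := by linear_combination d1 / 2 + (e1 + e2) / 4
  have c10 : c (1,0) = 0 := by linear_combination d1 / 2 - (e1 + e2) / 4
  have c12 : c (1,2) = 0 := by linear_combination d2 / 2 + (e2 - e1) / 4
  have c21 : c (2,1) = 0 := by linear_combination d2 / 2 - (e2 - e1) / 4
  have c02 : c (0,2) = 0 := by linear_combination d3 / 2 + e3 / 2 - (e2 - e1) / 4
  have c20 : c (2,0) = 0 := by linear_combination d3 / 2 - e3 / 2 + (e2 - e1) / 4
  have hdiag : ∀ a : Fin 3, c (a, a) = 0 := by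
    intro a
    by_cases hai : a = i
    · subst hai; exact hi
    by_cases haj : a = j
    · subst haj; exact hj
    have hmem1 : i ∉ ({j, a} : Finset (Fin 3)) := by
      simp only [Finset.mem_insert, Finset.mem_singleton]
      push_neg
      exact ⟨hij, fun h => hai h.symm⟩
    have hmem2 : j ∉ ({a} : Finset (Fin 3)) := by
      simp only [Finset.mem_singleton]
      exact fun h => haj h.symm
    have h1 : ({i, j, a} : Finset (Fin 3)) = Finset.univ := by
      apply Finset.eq_univ_of_card
      rw [Finset.card_insert_of_notMem hmem1, Finset.card_insert_of_notMem hmem2,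
        Finset.card_singleton]
      simp
    have hsum : c (i,i) + c (j,j) + c (a,a) = c (0,0) + c (1,1) + c (2,2) := by
      calc c (i,i) + c (j,j) + c (a,a)
          = ∑ k ∈ ({i,j,a} : Finset (Fin 3)), c (k,k) := by
            rw [Finset.sum_insert hmem1, Finset.sum_insert hmem2, Finset.sum_singleton]; ring
        _ = ∑ k, c (k,k) := by rw [h1]
        _ = _ := by simp [Fin.sum_univ_three]
    linear_combination hsum - hi - hj + t0
  intro q
  obtain ⟨a, b⟩ := q
  fin_cases a <;> fin_cases b <;>
    first
      | exact hdiag _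
      | exact c01
      | exact c10
      | exact c12
      | exact c21
      | exact c02
      | exact c20

/-- If `W` is doubly stochastic (with sums `3`), two diagonal entries equal `1`, and
`Φ_W` is positive, then `Φ_W` is optimal. -/
theorem optimal_of_two_saturated_vertices (W : Matrix (Fin 3) (Fin 3) ℝ)
    (hW : ∀ i j, 0 ≤ W i j)
    (hrow : ∀ i, ∑ j, W i j = 3) (hcol : ∀ j, ∑ i, W i j = 3)
    (i j : Fin 3) (hij : i ≠ j) (hii : W i i = 1) (hjj : W j j = 1)
    (hpos : IsPositiveMap (PhiW W)) :
    IsOptimal (PhiW W) := by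
  intro Ψ hΨ hsub
  have hC : (ChoiMatrix Ψ).PosSemidef := hΨ
  -- kernel facts for diagonal saturated vertices
  have hkerdiag : ∀ k : Fin 3, W k k = 1 → ∀ p : Fin 3 × Fin 3, ChoiMatrix Ψ p (k, k) = 0 := by
    intro k hkk p
    have hker := aux_ker_of_zero W Ψ hC hsub (fun m => if m = k then (1:ℂ) else 0)
      (aux_phi_quad_zero_single W k hkk)
    have h := congrFun hker p
    have hv : (fun q : Fin 3 × Fin 3 =>
        star (if q.1 = k then (1:ℂ) else 0) * (if q.2 = k then (1:ℂ) else 0))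
        = fun q => if q = (k, k) then (1:ℂ) else 0 := by
      funext q
      obtain ⟨a, b⟩ := q
      by_cases ha : a = k <;> by_cases hb : b = k <;>
        simp [ha, hb, Prod.ext_iff]
    simp only [mulVec, dotProduct, Pi.zero_apply] at h
    rw [show (fun q : Fin 3 × Fin 3 => ChoiMatrix Ψ p q *
        (star (if q.1 = k then (1:ℂ) else 0) * (if q.2 = k then (1:ℂ) else 0)))
        = fun q => ChoiMatrix Ψ p q * (if q = (k,k) then (1:ℂ) else 0) from by
      funext q; rw [congrFun hv q]] at h
    simpa [mul_ite, Finset.sum_ite_eq'] using h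
  -- kernel facts for unimodular vectors
  have hkeruni : ∀ p : Fin 3 × Fin 3, ∀ α β : ℂ, α * star α = 1 → β * star β = 1 →
      (ChoiMatrix Ψ p (0,0) + ChoiMatrix Ψ p (1,1) + ChoiMatrix Ψ p (2,2))
        + ChoiMatrix Ψ p (0,1) * α + ChoiMatrix Ψ p (1,0) * star α
        + ChoiMatrix Ψ p (0,2) * β + ChoiMatrix Ψ p (2,0) * star β
        + ChoiMatrix Ψ p (1,2) * (star α * β) + ChoiMatrix Ψ p (2,1) * (α * star β) = 0 := by
    intro p α β hα hβ
    have hx : ∀ m, (![1, α, β]) m * star ((![1, α, β]) m) = 1 := by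
      intro m
      fin_cases m
      · simp
      · exact hα
      · exact hβ
    have hker := aux_ker_of_zero W Ψ hC hsub ![1, α, β]
      (aux_phi_quad_zero W hrow ![1, α, β] hx)
    have h := congrFun hker p
    simp only [mulVec, dotProduct, Fintype.sum_prod_type, Fin.sum_univ_three,
      Matrix.cons_val_zero, Matrix.cons_val_one, Matrix.head_cons, Matrix.cons_val_two,
      Matrix.tail_cons, Pi.zero_apply, star_one] at h
    linear_combination h - ChoiMatrix Ψ p (1,1) * hα - ChoiMatrix Ψ p (2,2) * hβ
  -- all entries of the Choi matrix vanish
  have key : ∀ p q : Fin 3 × Fin 3, ChoiMatrix Ψ p q = 0 := by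
    intro p
    exact aux_solve_system (fun q => ChoiMatrix Ψ p q) i j hij
      (hkerdiag i hii p) (hkerdiag j hjj p) (hkeruni p)
  -- conclude Ψ = 0
  have hE : ∀ a b : Fin 3, Ψ (Matrix.single a b 1) = 0 := by
    intro a b
    ext c d
    exact key (a, c) (b, d)
  apply LinearMap.ext
  intro X
  rw [aux_matrix_decomp X]
  simp only [map_sum, LinearMap.map_smul]
  simp [hE]
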